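/- Let Π be a stable pruned tree (i.e., wt(v) > 0 for every vertex v) of height 3, that is, with Σ_v (jdeg(v) + Σ_{t ∈ T(v)} t + |F(v)|) = 3. Then Π has at most two leaves; equivalently, the underlying tree is a chain (every vertex has degree at most 2). (Each leaf v has wt(v) = −1 + c(v) > 0, hence contribution c(v) > 1; three leaves would give total contribution > 3, contradicting height 3, since every vertex has c(v) ≥ 0.) -/
import Mathlib


noncomputable section

/-- The allowed slicing pairs `(e_v, e_w)` for a sliced edge, in either order:
`(1/2,1/2)`, `(1/3,2/3)`, `(1/4,3/4)`, `(1/6,5/6)`. -/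
def allowedSlicings : Set (ℚ × ℚ) :=
  {(1/2, 1/2), (1/3, 2/3), (2/3, 1/3), (1/4, 3/4), (3/4, 1/4), (1/6, 5/6), (5/6, 1/6)}

/-- The set of allowed klt-markings `{1/6, 1/4, 1/3, 1/2, 2/3, 3/4, 5/6}`. -/
def kltMarkingSet : Set ℚ := {1/6, 1/4, 1/3, 1/2, 2/3, 3/4, 5/6}

/-- A *pruned tree* on a vertex type `V`: a tree `G` on `V`, a set `E₀` of sliced edges with
a slicing `(slice v w, slice w v)` taken from the allowed list for each sliced edge `s(v,w)`,
a function `jdeg : V → ℚ` with nonnegative values in `(1/12)·ℤ`, and for each vertex a finite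
multiset `klt v` of klt-markings and a number `lc v` recording the cardinality of the finite
set `F(v)` of lc-markings.  (A sliced tree is a pruned tree with no markings.) -/
structure PrunedTree (V : Type) where
  /-- the underlying graph -/
  G : SimpleGraph V
  /-- the underlying graph is a tree -/
  isTree : G.IsTree
  /-- the set of sliced edges -/
  E₀ : Set (Sym2 V)
  E₀_subset : E₀ ⊆ G.edgeSet
  /-- `slice v w` is the slicing `e_v` at `v` of the sliced edge `e = s(v,w)`
  (junk value if `s(v,w)` is not a sliced edge) -/
  slice : V → V → ℚ
  slice_mem_allowed : ∀ v w : V, s(v, w) ∈ E₀ → (slice v w, slice w v) ∈ allowedSlicings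
  /-- the degree of the `j`-map divided by 12 -/
  jdeg : V → ℚ
  jdeg_nonneg : ∀ v, 0 ≤ jdeg v
  jdeg_twelfth : ∀ v, ∃ m : ℤ, jdeg v = (m : ℚ) / 12
  /-- the multiset `T(v)` of klt-markings at `v` -/
  klt : V → Multiset ℚ
  /-- the cardinality `|F(v)|` of the set of lc-markings at `v` -/
  lc : V → ℕ

namespace PrunedTree

variable {V : Type}

/-- The degree of a vertex: the number of edges incident to it. -/
def deg (P : PrunedTree V) (v : V) : ℕ := (P.G.neighborSet v).ncard

/-- The contribution `c(v) = jdeg(v) + Σ_{t ∈ T(v)} t + |F(v)|` of a vertex. -/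
def contrib (P : PrunedTree V) (v : V) : ℚ :=
  P.jdeg v + (P.klt v).sum + (P.lc v : ℚ)

/-- The weight `wt(v) = deg(v) − 2 + c(v)` of a vertex. -/
def wt (P : PrunedTree V) (v : V) : ℚ := (P.deg v : ℚ) - 2 + P.contrib v

/-- The height `Σ_v c(v)` of a pruned tree. -/
def height [Fintype V] (P : PrunedTree V) : ℚ := ∑ v : V, P.contrib v

/-- The total weight `Σ_v wt(v)` of a pruned tree. -/
def totalWeight [Fintype V] (P : PrunedTree V) : ℚ := ∑ v : V, P.wt v

/-- A leaf is a vertex of degree 1. -/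
def IsLeaf (P : PrunedTree V) (v : V) : Prop := P.deg v = 1

/-- The sum `Σ_{e ∈ E₀(v)} e_v` of the slicings at `v` of the sliced edges incident to `v`. -/
def slicedSum (P : PrunedTree V) (v : V) : ℚ :=
  ∑ᶠ w ∈ {w : V | s(v, w) ∈ P.E₀}, P.slice v w

/-- `IsPruneStep P v P' ι` says that the pruned tree `P'` (with vertex type `W`, identified
with `V \ {v}` via the injection `ι`) is obtained from `P` by the pruning step at the leaf
`v` of weight `wt(v) ≤ 0`: delete `v` and its edge, and with `t := wt(v) + 1`, add one new
lc-marking at the neighbour `w` of `v` if `t = 1`, change nothing if `t = 0`, and otherwise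
add `t` to `T(w)` as a new klt-marking. -/
def IsPruneStep {W : Type} (P : PrunedTree V) (v : V) (P' : PrunedTree W) (ι : W → V) :
    Prop :=
  P.IsLeaf v ∧ P.wt v ≤ 0 ∧
  Function.Injective ι ∧ Set.range ι = {u : V | u ≠ v} ∧
  (∀ a b : W, P'.G.Adj a b ↔ P.G.Adj (ι a) (ι b)) ∧
  (∀ a b : W, s(a, b) ∈ P'.E₀ ↔ s(ι a, ι b) ∈ P.E₀) ∧
  (∀ a b : W, P'.slice a b = P.slice (ι a) (ι b)) ∧
  (∀ u : W, P'.jdeg u = P.jdeg (ι u)) ∧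
  ∃ w : W, P.G.Adj v (ι w) ∧
    (∀ u : W, u ≠ w → P'.klt u = P.klt (ι u) ∧ P'.lc u = P.lc (ι u)) ∧
    (P.wt v + 1 = 1 → P'.klt w = P.klt (ι w) ∧ P'.lc w = P.lc (ι w) + 1) ∧
    (P.wt v + 1 = 0 → P'.klt w = P.klt (ι w) ∧ P'.lc w = P.lc (ι w)) ∧
    (P.wt v + 1 ≠ 1 → P.wt v + 1 ≠ 0 →
      P'.klt w = (P.wt v + 1) ::ₘ P.klt (ι w) ∧ P'.lc w = P.lc (ι w))

end PrunedTree

/-- **A stable pruned tree of height 3 is a chain.**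
Let `Π` be a stable pruned tree (i.e., `wt(v) > 0` for every vertex) of height `3`, with
klt-markings from the allowed set and satisfying the sliced-tree integrality condition.
Then `Π` has at most two leaves; equivalently, the underlying tree is a chain, i.e. every
vertex has degree at most `2`. -/
theorem stmt_10 {V : Type} [Fintype V] (P : PrunedTree V)
    (hT : ∀ v : V, ∀ t ∈ P.klt v, t ∈ kltMarkingSet)
    (hInt : ∀ v : V, ∃ m : ℤ, P.jdeg v + P.slicedSum v = (m : ℚ))
    (hstable : ∀ v : V, 0 < P.wt v)
    (hheight : P.height = 3) :
    {v : V | P.IsLeaf v}.ncard ≤ 2 ∧ ∀ v : V, P.deg v ≤ 2 := by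
  classical
  -- contributions are nonnegative
  have hc : ∀ v : V, 0 ≤ P.contrib v := by
    intro v
    have hk : 0 ≤ (P.klt v).sum := by
      refine Multiset.sum_nonneg ?_
      intro t ht
      have := hT v t ht
      simp only [kltMarkingSet, Set.mem_insert_iff, Set.mem_singleton_iff] at this
      rcases this with h | h | h | h | h | h | h <;> rw [h] <;> norm_num
    have h1 := P.jdeg_nonneg v
    have h2 : (0 : ℚ) ≤ (P.lc v : ℚ) := Nat.cast_nonneg _
    unfold PrunedTree.contrib
    linarith
  -- degree equals graph degree
  have hdeg : ∀ v : V, P.deg v = P.G.degree v := by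
    intro v
    rw [PrunedTree.deg, Set.ncard_eq_toFinset_card', SimpleGraph.degree,
      SimpleGraph.neighborFinset]
  have hV : Nonempty V := P.isTree.isConnected.nonempty
  -- total weight is 1
  have hE : P.G.edgeFinset.card + 1 = Fintype.card V := P.isTree.card_edgeFinset
  have hD : ∑ v : V, P.G.degree v = 2 * P.G.edgeFinset.card :=
    P.G.sum_degrees_eq_twice_card_edges
  have hDQ : ∑ v : V, (P.deg v : ℚ) = 2 * (Fintype.card V : ℚ) - 2 := by
    have : ∑ v : V, P.deg v = 2 * P.G.edgeFinset.card := by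
      rw [← hD]; exact Finset.sum_congr rfl fun v _ => hdeg v
    have hcast : (∑ v : V, (P.deg v : ℚ)) = ((∑ v : V, P.deg v : ℕ) : ℚ) := by
      push_cast; rfl
    rw [hcast, this]
    have : ((P.G.edgeFinset.card : ℚ)) = (Fintype.card V : ℚ) - 1 := by
      have := hE
      push_cast [← this]
      ring
    push_cast [this]
    ring
  have hsum : ∑ v : V, P.wt v = 1 := by
    have : ∑ v : V, P.wt v
        = (∑ v : V, (P.deg v : ℚ)) - 2 * (Fintype.card V : ℚ) + P.height := by
      have h0 : ∑ v : V, P.wt v = ∑ v : V, ((P.deg v : ℚ) - 2 + P.contrib v) := rfl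
      rw [h0, Finset.sum_add_distrib, Finset.sum_sub_distrib, PrunedTree.height]
      simp [Finset.card_univ]
      ring
    rw [this, hDQ, hheight]
    ring
  constructor
  · -- at most two leaves
    by_contra hcon
    push_neg at hcon
    have h3 : 3 ≤ {v : V | P.IsLeaf v}.ncard := hcon
    set S : Finset V := {v : V | P.IsLeaf v}.toFinset with hS
    have hScard : 3 ≤ S.card := by
      rw [hS, ← Set.ncard_eq_toFinset_card']
      exact h3
    obtain ⟨a, ha⟩ := Finset.card_pos.mp (show 0 < S.card by omega)
    have h2 : 2 ≤ (S.erase a).card := by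
      rw [Finset.card_erase_of_mem ha]; omega
    obtain ⟨b, hb⟩ := Finset.card_pos.mp (show 0 < (S.erase a).card by omega)
    have h1 : 1 ≤ ((S.erase a).erase b).card := by
      rw [Finset.card_erase_of_mem hb, Finset.card_erase_of_mem ha]; omega
    obtain ⟨c, hcmem⟩ := Finset.card_pos.mp (show 0 < ((S.erase a).erase b).card by omega)
    have hba : b ≠ a := (Finset.mem_erase.mp hb).1
    have hcb : c ≠ b := (Finset.mem_erase.mp hcmem).1
    have hca : c ≠ a := (Finset.mem_erase.mp (Finset.mem_erase.mp hcmem).2).1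
    have hbS : b ∈ S := (Finset.mem_erase.mp hb).2
    have hcS : c ∈ S := (Finset.mem_erase.mp (Finset.mem_erase.mp hcmem).2).2
    -- each leaf has contribution > 1
    have hleaf : ∀ v : V, v ∈ S → 1 < P.contrib v := by
      intro v hv
      have hvl : P.IsLeaf v := by
        rw [hS, Set.mem_toFinset] at hv; exact hv
      have := hstable v
      rw [PrunedTree.wt, hvl] at this
      push_cast at this
      linarith
    have hsub : ({a, b, c} : Finset V) ⊆ Finset.univ := Finset.subset_univ _
    have hle : ∑ v ∈ ({a, b, c} : Finset V), P.contrib v ≤ ∑ v : V, P.contrib v :=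
      Finset.sum_le_sum_of_subset_of_nonneg hsub fun i _ _ => hc i
    have hsum3 : ∑ v ∈ ({a, b, c} : Finset V), P.contrib v
        = P.contrib a + P.contrib b + P.contrib c := by
      rw [Finset.sum_insert (by simp [hba.symm, hca.symm]),
        Finset.sum_insert (by simp [hcb.symm]), Finset.sum_singleton]
      ring
    have := hleaf a ha
    have := hleaf b hbS
    have := hleaf c hcS
    have hh : P.height = ∑ v : V, P.contrib v := rfl
    rw [← hh] at hle
    rw [hheight, hsum3] at hle
    linarith
  · -- every vertex has degree at most 2
    intro v
    by_contra hdv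
    push_neg at hdv
    have hdv3 : 3 ≤ P.deg v := hdv
    have hwtv : 1 ≤ P.wt v := by
      have : (3 : ℚ) ≤ (P.deg v : ℚ) := by exact_mod_cast hdv3
      have := hc v
      rw [PrunedTree.wt]
      linarith
    -- v has a neighbour u ≠ v
    have hne : (P.G.neighborSet v).Nonempty := by
      rw [← Set.ncard_pos (Set.toFinite _)]
      have : 0 < P.deg v := by omega
      exact this
    obtain ⟨u, hu⟩ := hne
    have huv : u ≠ v := (P.G.ne_of_adj hu).symm
    have hsub : ({v, u} : Finset V) ⊆ Finset.univ := Finset.subset_univ _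
    have hle : ∑ x ∈ ({v, u} : Finset V), P.wt x ≤ ∑ x : V, P.wt x :=
      Finset.sum_le_sum_of_subset_of_nonneg hsub fun i _ _ => le_of_lt (hstable i)
    have hsum2 : ∑ x ∈ ({v, u} : Finset V), P.wt x = P.wt v + P.wt u := by
      rw [Finset.sum_insert (by simp [huv.symm]), Finset.sum_singleton]
    rw [hsum, hsum2] at hle
    have := hstable u
    linarith
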